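/- arXiv:2008.07413 — 5 statements merged into one kernel-verified Lean document; each statement's English description precedes it below -/
import Mathlib

section
/- Let X be a proper metric space homeomorphic to ℝ², let λ ≥ 1 and R > 0. If X is (λ,R)-linearly locally contractible, then X is (λ',R)-linearly locally connected for every λ' > λ. -/
open Metric MeasureTheory Set

noncomputable section

/-- The Euclidean plane. -/
abbrev E2 : Type := EuclideanSpace ℝ (Fin 2)

/-- A metric space is geodesic if any two points are joined by a path whose length equals
their distance (equivalently, by an isometric image of the interval `[0, dist x y]`). -/
def IsGeodesicSpace (X : Type*) [MetricSpace X] : Prop :=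
  ∀ x y : X, ∃ γ : ℝ → X, γ 0 = x ∧ γ (dist x y) = y ∧
    ∀ s ∈ Set.Icc (0 : ℝ) (dist x y), ∀ t ∈ Set.Icc (0 : ℝ) (dist x y),
      dist (γ s) (γ t) = |s - t|

/-- A set is a Jordan curve if it is a homeomorphic image of the circle `S¹`. -/
def IsJordanCurve {X : Type*} [TopologicalSpace X] (S : Set X) : Prop :=
  Nonempty (↥(Metric.sphere (0 : E2) 1) ≃ₜ ↥S)

/-- A Jordan domain is a bounded domain (open connected set) whose topological boundary
is a Jordan curve. -/
def IsJordanDomain {X : Type*} [MetricSpace X] (U : Set X) : Prop :=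
  IsOpen U ∧ IsConnected U ∧ Bornology.IsBounded U ∧ IsJordanCurve (frontier U)

/-- Hausdorff 2-measure, normalized so that it agrees with Lebesgue measure on `ℝ²`
(Mathlib's `μH[2]` uses `diam²`; the normalized measure is `(π/4)·μH[2]`). -/
def normH2 (X : Type*) [EMetricSpace X] [MeasurableSpace X] [BorelSpace X] :
    Measure X := ENNReal.ofReal (Real.pi / 4) • μH[2]

/-- The geometric `C`-quadratic isoperimetric inequality:
`ℋ²(U) ≤ C·ℋ¹(∂U)²` for every Jordan domain `U`. -/
def GeomQII (X : Type*) [MetricSpace X] [MeasurableSpace X] [BorelSpace X] (C : ℝ) : Prop :=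
  ∀ U : Set X, IsJordanDomain U →
    normH2 X U ≤ ENNReal.ofReal C * (μH[1] (frontier U)) ^ 2

/-- `X` is `(λ,R)`-linearly locally connected: (LLC1) any two points of a ball `B(x,r)`,
`r ∈ (0,R]`, lie in a continuum contained in `B(x,λr)`; (LLC2) any two points of
`X ∖ B(x,r)` lie in a continuum contained in `X ∖ B(x,r/λ)`. -/
def LinearlyLocallyConnected (X : Type*) [MetricSpace X] (lam R : ℝ) : Prop :=
  (∀ (x : X) (r : ℝ), 0 < r → r ≤ R → ∀ y ∈ Metric.ball x r, ∀ z ∈ Metric.ball x r,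
      ∃ E : Set X, IsCompact E ∧ IsConnected E ∧ E ⊆ Metric.ball x (lam * r) ∧
        y ∈ E ∧ z ∈ E) ∧
  (∀ (x : X) (r : ℝ), 0 < r → r ≤ R → ∀ y ∉ Metric.ball x r, ∀ z ∉ Metric.ball x r,
      ∃ E : Set X, IsCompact E ∧ IsConnected E ∧ E ⊆ (Metric.ball x (r / lam))ᶜ ∧
        y ∈ E ∧ z ∈ E)

/-- `X` is `(λ,R)`-linearly locally contractible: every ball `B(x,r)` with `r ∈ (0,R]` can
be contracted to a point inside `B(x,λr)`, i.e. the inclusion `B(x,r) ↪ B(x,λr)` is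
null-homotopic. -/
def LinearlyLocallyContractible (X : Type*) [MetricSpace X] (lam R : ℝ) : Prop :=
  ∀ (x : X) (r : ℝ), 0 < r → r ≤ R →
    ∃ (hsub : Metric.ball x r ⊆ Metric.ball x (lam * r))
      (c : ↥(Metric.ball x (lam * r))),
      ContinuousMap.Homotopic
        ⟨Set.inclusion hsub, continuous_inclusion hsub⟩
        (ContinuousMap.const _ c)

section AuxLLCProof

open Complex

/-- Step lemma: if `g` has a continuous logarithm and `f` is pointwise closer to `g`
than `‖g‖`, then `f` has a continuous logarithm. -/
lemma log_step {A : Type*} [TopologicalSpace A] (f g : A → ℂ) (ℓ : A → ℂ)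
    (hf : Continuous f) (hg : Continuous g) (hℓ : Continuous ℓ)
    (hexp : ∀ a, Complex.exp (ℓ a) = g a)
    (hclose : ∀ a, dist (f a) (g a) < ‖g a‖) :
    ∃ ℓ' : A → ℂ, Continuous ℓ' ∧ ∀ a, Complex.exp (ℓ' a) = f a := by
  have hg0 : ∀ a, g a ≠ 0 := by
    intro a h
    have := hclose a
    simp [h] at this
    exact absurd this (not_lt.mpr (norm_nonneg _))
  have hslit : ∀ a, f a / g a ∈ Complex.slitPlane := by
    intro a
    have h1 : ‖f a / g a - 1‖ < 1 := by
      rw [div_sub_one (hg0 a), norm_div]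
      rw [div_lt_one (by simpa using hg0 a)]
      simpa [dist_eq_norm] using hclose a
    rw [Complex.mem_slitPlane_iff]
    left
    have := (Complex.abs_re_le_norm (f a / g a - 1)).trans h1.le
    have h2 : |(f a / g a).re - 1| < 1 := by
      have := (Complex.abs_re_le_norm (f a / g a - 1)).trans_lt h1
      simpa using this
    have := abs_lt.mp h2
    linarith [this.1]
  refine ⟨fun a => ℓ a + Complex.log (f a / g a), ?_, ?_⟩
  · apply hℓ.add
    apply (hf.div hg hg0).clog
    intro a; exact hslit a
  · intro a
    rw [Complex.exp_add, hexp, Complex.exp_log (div_ne_zero ?_ (hg0 a)),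
      mul_div_cancel₀ _ (hg0 a)]
    intro h0
    have := hclose a
    rw [h0] at this
    simp [dist_eq_norm] at this

/-- If a nowhere-vanishing map on a compact space is homotopic (through nonvanishing maps)
to a constant, then it has a continuous logarithm. -/
lemma exists_log_of_homotopy {A : Type*} [PseudoMetricSpace A] [CompactSpace A]
    (H : C(unitInterval × A, ℂ)) (hne : ∀ p, H p ≠ 0)
    (z₀ : ℂ) (h0 : ∀ a, H (0, a) = z₀) :
    ∃ ℓ : A → ℂ, Continuous ℓ ∧ ∀ a, Complex.exp (ℓ a) = H (1, a) := by
  rcases isEmpty_or_nonempty A with hA | hA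
  · exact ⟨fun _ => 0, continuous_const, fun a => (hA.false a).elim⟩
  obtain ⟨p₀, -, hp₀'⟩ := isCompact_univ.exists_isMinOn univ_nonempty
    H.continuous.norm.continuousOn
  have hp₀ : ∀ p, ‖H p₀‖ ≤ ‖H p‖ := fun p => hp₀' (mem_univ p)
  set m := ‖H p₀‖ with hm
  have hm0 : 0 < m := norm_pos_iff.mpr (hne p₀)
  obtain ⟨δ, hδ0, hδ⟩ := Metric.uniformContinuous_iff.mp
    (CompactSpace.uniformContinuous_of_continuous H.continuous) m hm0
  obtain ⟨n, hn⟩ := exists_nat_gt (1 / δ)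
  have hn0 : 0 < (n : ℝ) := lt_trans (by positivity) hn
  have h1n : (1 : ℝ) / n < δ := by
    rw [div_lt_iff₀ hn0]
    have := (div_lt_iff₀ hδ0).mp hn
    linarith [mul_comm (n : ℝ) δ]
  have hmem : ∀ k : ℕ, k ≤ n → (k : ℝ) / n ∈ unitInterval := by
    intro k hk
    constructor
    · positivity
    · rw [div_le_one hn0]; exact_mod_cast hk
  have key : ∀ k : ℕ, ∀ hk : k ≤ n, ∃ ℓ : A → ℂ, Continuous ℓ ∧
      ∀ a, Complex.exp (ℓ a) = H (⟨(k : ℝ) / n, hmem k hk⟩, a) := by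
    intro k
    induction k with
    | zero =>
      intro _
      refine ⟨fun _ => Complex.log z₀, continuous_const, fun a => ?_⟩
      have h00 : (⟨(0 : ℕ) / (n : ℝ), hmem 0 (Nat.zero_le n)⟩ : unitInterval) = 0 := by
        ext; simp
      rw [h00, h0 a, Complex.exp_log]
      rw [← h0 a]
      exact hne _
    | succ k ih =>
      intro hk
      obtain ⟨ℓ, hℓc, hℓ⟩ := ih (Nat.le_of_succ_le hk)
      set t : unitInterval := ⟨(k : ℝ) / n, hmem k (Nat.le_of_succ_le hk)⟩
      set t' : unitInterval := ⟨((k + 1 : ℕ) : ℝ) / n, hmem (k + 1) hk⟩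
      have hdist : ∀ a : A, dist (H (t', a)) (H (t, a)) < m := by
        intro a
        apply hδ
        rw [Prod.dist_eq]
        simp only [dist_self]
        rw [max_eq_left dist_nonneg, Subtype.dist_eq]
        show dist ((↑(k + 1 : ℕ) : ℝ) / n) ((k : ℝ) / n) < δ
        rw [Real.dist_eq]
        push_cast
        have h1 : ((k : ℝ) + 1) / n - (k : ℝ) / n = 1 / n := by ring
        rw [h1, abs_div, abs_one, abs_of_pos hn0]
        exact h1n
      obtain ⟨ℓ', hc', he'⟩ := log_step (fun a => H (t', a)) (fun a => H (t, a)) ℓ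
        (H.continuous.comp (Continuous.prodMk_right t'))
        (H.continuous.comp (Continuous.prodMk_right t))
        hℓc hℓ (fun a => lt_of_lt_of_le (hdist a) (hp₀ (t, a)))
      exact ⟨ℓ', hc', he'⟩
  obtain ⟨ℓ, hc, he⟩ := key n le_rfl
  refine ⟨ℓ, hc, fun a => ?_⟩
  have : (⟨(n : ℝ) / n, hmem n le_rfl⟩ : unitInterval) = 1 := by
    ext; field_simp; rfl
  rw [← this]
  exact he a

lemma int_valued_eq {φ : ℝ → ℝ} (hφ : Continuous φ)
    (hint : ∀ θ, ∃ n : ℤ, φ θ = n) (a b : ℝ) : φ a = φ b := by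
  have absurd_half : ∀ θ : ℝ, ∀ n : ℤ, φ θ = (n : ℝ) + 1/2 → False := by
    intro θ n hθ
    obtain ⟨m, hm⟩ := hint θ
    rw [hm] at hθ
    have : (2*m : ℤ) = 2*n + 1 := by exact_mod_cast (by linarith : (2*m:ℝ) = 2*n + 1)
    omega
  have main : ∀ u v : ℝ, u ≤ v → ¬ φ u < φ v := by
    intro u v huv hlt
    obtain ⟨nu, hnu⟩ := hint u
    obtain ⟨nv, hnv⟩ := hint v
    have h1 : nu < nv := by
      rw [hnu, hnv] at hlt; exact_mod_cast hlt
    have hc : (nu : ℝ) + 1/2 ∈ Icc (φ u) (φ v) := by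
      constructor
      · rw [hnu]; linarith
      · rw [hnv]
        have : (nu : ℝ) + 1 ≤ nv := by exact_mod_cast h1
        linarith
    obtain ⟨θ, -, hθ⟩ := intermediate_value_Icc huv hφ.continuousOn hc
    exact absurd_half θ nu hθ
  have main' : ∀ u v : ℝ, u ≤ v → ¬ φ v < φ u := by
    intro u v huv hlt
    obtain ⟨nu, hnu⟩ := hint u
    obtain ⟨nv, hnv⟩ := hint v
    have h1 : nv < nu := by
      rw [hnu, hnv] at hlt; exact_mod_cast hlt
    have hc : (nv : ℝ) + 1/2 ∈ Icc (φ v) (φ u) := by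
      constructor
      · rw [hnv]; linarith
      · rw [hnu]
        have : (nv : ℝ) + 1 ≤ nu := by exact_mod_cast h1
        linarith
    obtain ⟨θ, -, hθ⟩ := intermediate_value_Icc' huv hφ.continuousOn hc
    exact absurd_half θ nv hθ
  rcases le_total a b with hab | hab
  · rcases lt_trichotomy (φ a) (φ b) with hlt | heq | hgt
    · exact absurd hlt (main a b hab)
    · exact heq
    · exact absurd hgt (main' a b hab)
  · rcases lt_trichotomy (φ a) (φ b) with hlt | heq | hgt
    · exact absurd hlt (main' b a hab)
    · exact heq
    · exact absurd hgt (main b a hab)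

lemma no_retraction (z' : ℂ) (M : ℝ) (hM : 0 < M)
    (q : ℂ → ℂ) (hq : Continuous q) (hqne : ∀ w, q w ≠ z')
    (hid : ∀ w, M ≤ dist w z' → q w = w) : False := by
  have hAc : CompactSpace ↥(sphere (0:ℂ) 1) :=
    isCompact_iff_compactSpace.mp (isCompact_sphere 0 1)
  set H : C(unitInterval × ↥(sphere (0:ℂ) 1), ℂ) :=
    ⟨fun p => q (z' + ((p.1 : ℝ) : ℂ) * (M : ℂ) * (p.2 : ℂ)) - z', by
      apply Continuous.sub _ continuous_const
      apply hq.comp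
      apply Continuous.add continuous_const
      apply Continuous.mul
      apply Continuous.mul
      · exact Complex.continuous_ofReal.comp (continuous_subtype_val.comp continuous_fst)
      · exact continuous_const
      · exact continuous_subtype_val.comp continuous_snd⟩ with hH
  have hne : ∀ p, H p ≠ 0 := fun p => sub_ne_zero.mpr (hqne _)
  have h0 : ∀ a, H (0, a) = q z' - z' := by
    intro a; simp [hH]
  obtain ⟨ℓ, hℓc, hℓ⟩ := exists_log_of_homotopy H hne (q z' - z') h0
  have hnorm : ∀ a : ↥(sphere (0:ℂ) 1), ‖(a : ℂ)‖ = 1 := by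
    intro a; simpa [mem_sphere_iff_norm] using a.2
  have hℓ' : ∀ a : ↥(sphere (0:ℂ) 1), Complex.exp (ℓ a) = (M : ℂ) * (a : ℂ) := by
    intro a
    have h1 : H (1, a) = (M : ℂ) * (a : ℂ) := by
      have hd : M ≤ dist (z' + ((1:ℝ) : ℂ) * (M : ℂ) * (a : ℂ)) z' := by
        rw [dist_eq_norm]
        simp only [add_sub_cancel_left, Complex.ofReal_one, one_mul]
        rw [norm_mul, hnorm a, mul_one, Complex.norm_real, Real.norm_eq_abs,
          abs_of_pos hM]
      have : H (1, a) = q (z' + ((1:ℝ) : ℂ) * (M : ℂ) * (a : ℂ)) - z' := by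
        simp [hH]
      rw [this, hid _ hd]
      push_cast
      ring
    rw [← h1, hℓ a]
  set ρ : ℝ → ℂ := fun θ => ℓ ⟨Complex.exp ((θ : ℂ) * Complex.I), by
    simpa [mem_sphere_iff_norm] using Complex.abs_exp_ofReal_mul_I θ⟩ with hρ
  have hρc : Continuous ρ := by
    apply hℓc.comp
    apply Continuous.subtype_mk
    exact Complex.continuous_exp.comp (Complex.continuous_ofReal.mul continuous_const)
  have hρexp : ∀ θ : ℝ, Complex.exp (ρ θ) = (M : ℂ) * Complex.exp ((θ : ℂ) * Complex.I) :=
    fun θ => hℓ' _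
  set φ : ℝ → ℝ := fun θ => ((ρ θ).im - θ) / (2 * Real.pi) with hφ
  have hπ : (0:ℝ) < 2 * Real.pi := by positivity
  have hφc : Continuous φ := by
    apply Continuous.div_const
    exact (Complex.continuous_im.comp hρc).sub continuous_id
  have hint : ∀ θ, ∃ n : ℤ, φ θ = n := by
    intro θ
    have hexp1 : Complex.exp (ρ θ - (θ : ℂ) * Complex.I - Complex.log (M : ℂ)) = 1 := by
      rw [Complex.exp_sub, Complex.exp_sub, hρexp, Complex.exp_log (by
        exact_mod_cast ne_of_gt hM)]
      have hM0 : (M:ℂ) ≠ 0 := by exact_mod_cast ne_of_gt hM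
      field_simp [Complex.exp_ne_zero, hM0]
    obtain ⟨n, hn⟩ := Complex.exp_eq_one_iff.mp hexp1
    refine ⟨n, ?_⟩
    have him2 : (ρ θ).im - θ = n * (2 * Real.pi) := by
      have him := congrArg Complex.im hn
      simp [Complex.log_im, Complex.arg_ofReal_of_nonneg hM.le] at him
      linarith
    rw [hφ]
    field_simp [him2]
    rw [him2]; ring
  have hkey := int_valued_eq hφc hint 0 (2 * Real.pi)
  have hρeq : ρ 0 = ρ (2 * Real.pi) := by
    rw [hρ]
    apply congrArg ℓ
    apply Subtype.ext
    show Complex.exp _ = Complex.exp _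
    rw [Complex.ofReal_zero, zero_mul, Complex.exp_zero]
    rw [show ((2 * Real.pi : ℝ) : ℂ) * Complex.I = 2 * Real.pi * Complex.I by push_cast; ring]
    rw [Complex.exp_two_pi_mul_I]
  rw [hφ] at hkey
  simp only [] at hkey
  rw [← hρeq] at hkey
  have : (ρ 0).im - 0 = (ρ 0).im - 2 * Real.pi := by
    field_simp at hkey
    linarith
  linarith [Real.pi_pos]

instance : TietzeExtension ℂ := .of_homeo Complex.equivRealProdCLM.toHomeomorph

lemma bounded_component_absurd
    (K : Set ℂ) (hK : IsCompact K) (z' : ℂ) (hz' : z' ∉ K)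
    (H : C(unitInterval × ↥K, ℂ)) (c₀ : ℂ)
    (hne : ∀ p, H p ≠ z')
    (hH0 : ∀ a : ↥K, H (0, a) = c₀)
    (hH1 : ∀ a : ↥K, H (1, a) = (a : ℂ)) :
    ¬ Bornology.IsBounded (connectedComponentIn Kᶜ z') := by
  intro hbdd
  set V := connectedComponentIn Kᶜ z' with hV
  have hzV : z' ∈ V := mem_connectedComponentIn (by simpa using hz')
  have hVopen : IsOpen V := hK.isClosed.isOpen_compl.connectedComponentIn
  have hfr : frontier V ⊆ K := by
    intro w hw
    by_contra hwK
    have hwKc : w ∈ Kᶜ := hwK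
    have hwcl : w ∈ closure V := hw.1
    have hwnV : w ∉ V := fun hwV => hw.2 (by rwa [hVopen.interior_eq])
    have hopen : IsOpen (connectedComponentIn Kᶜ w) :=
      hK.isClosed.isOpen_compl.connectedComponentIn
    have hmem : w ∈ connectedComponentIn Kᶜ w := mem_connectedComponentIn hwKc
    obtain ⟨v, hv1, hv2⟩ := mem_closure_iff.mp hwcl _ hopen hmem
    have h1 := connectedComponentIn_eq (F := Kᶜ) (x := w) hv1
    have h2 := connectedComponentIn_eq (F := Kᶜ) (x := z') hv2
    exact hwnV (by rw [hV, h2, ← h1]; exact hmem)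
  have hfrcpt : IsCompact (frontier V) := by
    apply Metric.isCompact_of_isClosed_isBounded isClosed_frontier
    exact hbdd.closure.subset frontier_subset_closure
  haveI : CompactSpace ↥(frontier V) := isCompact_iff_compactSpace.mp hfrcpt
  set H₂ : C(unitInterval × ↥(frontier V), ℂ) :=
    ⟨fun p => H (p.1, ⟨(p.2 : ℂ), hfr p.2.2⟩) - z', by
      apply Continuous.sub _ continuous_const
      apply H.continuous.comp
      apply Continuous.prodMk continuous_fst
      exact (continuous_subtype_val.comp continuous_snd).subtype_mk _⟩ with hH₂
  have hne₂ : ∀ p, H₂ p ≠ 0 := fun p => sub_ne_zero.mpr (hne _)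
  have h0₂ : ∀ a, H₂ (0, a) = c₀ - z' := by
    intro a; simp only [hH₂, ContinuousMap.coe_mk]; rw [hH0]
  obtain ⟨ℓ, hℓc, hℓ⟩ := exists_log_of_homotopy H₂ hne₂ (c₀ - z') h0₂
  have hℓ' : ∀ a : ↥(frontier V), Complex.exp (ℓ a) = (a : ℂ) - z' := by
    intro a
    rw [hℓ a]
    simp only [hH₂, ContinuousMap.coe_mk]
    rw [hH1]
  obtain ⟨g, hg⟩ := ContinuousMap.exists_restrict_eq (X := ℂ) isClosed_frontier
    (⟨ℓ, hℓc⟩ : C(↥(frontier V), ℂ))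
  have hgval : ∀ (w : ℂ) (hw : w ∈ frontier V), g w = ℓ ⟨w, hw⟩ := by
    intro w hw
    have := ContinuousMap.congr_fun hg ⟨w, hw⟩
    simpa using this
  classical
  set q : ℂ → ℂ := fun w => if w ∈ closure V then z' + Complex.exp (g w) else w with hq
  have hqc : Continuous q := by
    apply Continuous.if ?_ (continuous_const.add (Complex.continuous_exp.comp g.continuous))
      continuous_id
    intro w hw
    have hwfr : w ∈ frontier V := by
      have : frontier {a : ℂ | a ∈ closure V} ⊆ frontier V := by
        rw [show {a : ℂ | a ∈ closure V} = closure V from rfl]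
        exact frontier_closure_subset
      exact this hw
    show z' + Complex.exp (g w) = w
    rw [hgval w hwfr, hℓ' ⟨w, hwfr⟩]
    ring
  have hqne : ∀ w, q w ≠ z' := by
    intro w
    show (if w ∈ closure V then z' + Complex.exp (g w) else w) ≠ z'
    split_ifs with hw
    · intro hcon
      have : Complex.exp (g w) = 0 := by linear_combination hcon
      exact Complex.exp_ne_zero (g w) this
    · intro hcon
      exact hw (hcon ▸ subset_closure hzV)
  obtain ⟨M, hM1, hM2⟩ := hbdd.closure.subset_ball_lt 0 z'
  have hid : ∀ w, M ≤ dist w z' → q w = w := by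
    intro w hw
    show (if w ∈ closure V then z' + Complex.exp (g w) else w) = w
    rw [if_neg]
    intro hcl
    exact absurd (hM2 hcl) (by simp [Metric.mem_ball]; exact hw)
  exact no_retraction z' M hM1 q hqc hqne hid

lemma isPathConnected_norm_gt (M : ℝ) (hM : 0 < M) :
    IsPathConnected {w : ℂ | M < ‖w‖} := by
  have hrank : 1 < Module.rank ℝ ℂ := by
    rw [Complex.rank_real_complex]; norm_num
  set S : Set ℂ := {w : ℂ | M < ‖w‖} with hS
  have radial : ∀ w : ℂ, w ∈ S → ∀ ρ : ℝ, ‖w‖ ≤ ρ →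
      JoinedIn S w ((ρ / ‖w‖) • w) := by
    intro w hw ρ hρ
    have hwM : M < ‖w‖ := hw
    have hw0 : (0:ℝ) < ‖w‖ := hM.trans hwM
    have hfac : (1:ℝ) ≤ ρ / ‖w‖ := (one_le_div hw0).mpr hρ
    have hcont : Continuous fun τ : unitInterval =>
        ((1 : ℝ) + (τ : ℝ) * (ρ / ‖w‖ - 1)) • w := by
      refine Continuous.smul (f := fun τ : unitInterval => ((1 : ℝ) + (τ : ℝ) * (ρ / ‖w‖ - 1))) (g := fun _ => w) ?_ continuous_const
      exact continuous_const.add ((continuous_subtype_val).mul continuous_const)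
    refine ⟨⟨⟨fun τ => ((1 : ℝ) + (τ : ℝ) * (ρ / ‖w‖ - 1)) • w, hcont⟩, ?_, ?_⟩, ?_⟩
    · show ((1 : ℝ) + ((0 : unitInterval) : ℝ) * (ρ / ‖w‖ - 1)) • w = w
      norm_num
    · show ((1 : ℝ) + ((1 : unitInterval) : ℝ) * (ρ / ‖w‖ - 1)) • w = (ρ / ‖w‖) • w
      rw [show ((1 : unitInterval) : ℝ) = 1 from rfl]
      congr 1
      ring
    · intro τ
      show M < ‖((1 : ℝ) + (τ : ℝ) * (ρ / ‖w‖ - 1)) • w‖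
      rw [norm_smul, Real.norm_eq_abs]
      have h1 : (0:ℝ) ≤ (τ : ℝ) * (ρ / ‖w‖ - 1) :=
        mul_nonneg τ.2.1 (by linarith)
      rw [abs_of_pos (by linarith)]
      calc M < ‖w‖ := hwM
        _ = 1 * ‖w‖ := (one_mul _).symm
        _ ≤ (1 + (τ : ℝ) * (ρ / ‖w‖ - 1)) * ‖w‖ :=
          mul_le_mul_of_nonneg_right (by linarith) hw0.le
  have hsphere : ∀ ρ : ℝ, M < ρ → Metric.sphere (0:ℂ) ρ ⊆ S := by
    intro ρ hρ u hu
    have : ‖u‖ = ρ := by simpa [mem_sphere_iff_norm] using hu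
    show M < ‖u‖
    rw [this]; exact hρ
  have hb : ((M + 1 : ℝ) : ℂ) ∈ S := by
    show M < ‖((M + 1 : ℝ) : ℂ)‖
    rw [Complex.norm_real, Real.norm_eq_abs, abs_of_pos (by linarith)]
    linarith
  refine ⟨((M + 1 : ℝ) : ℂ), hb, ?_⟩
  intro y hy
  set ρ : ℝ := max ‖((M + 1 : ℝ) : ℂ)‖ ‖y‖ with hρdef
  have hρM : M < ρ := lt_of_lt_of_le hb (le_max_left _ _)
  have hρ0 : (0:ℝ) < ρ := hM.trans hρM
  have hsph_mem : ∀ w : ℂ, w ∈ S → ‖w‖ ≤ ρ → (ρ / ‖w‖) • w ∈ Metric.sphere (0:ℂ) ρ := by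
    intro w hw hwρ
    have hw0 : (0:ℝ) < ‖w‖ := hM.trans hw
    rw [mem_sphere_iff_norm, sub_zero, norm_smul, Real.norm_eq_abs,
      abs_of_pos (by positivity), div_mul_cancel₀ _ hw0.ne']
  have j1 := radial _ hb ρ (le_max_left _ _)
  have j2 := radial _ hy ρ (le_max_right _ _)
  have jS := ((isPathConnected_sphere hrank (0:ℂ) hρ0.le).joinedIn _
    (hsph_mem _ hb (le_max_left _ _)) _ (hsph_mem _ hy (le_max_right _ _))).mono
    (hsphere ρ hρM)
  exact (j1.trans jS).trans j2.symm

end AuxLLCProof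

/-- Lemma 2.1(i): a proper metric space homeomorphic to `ℝ²` which is `(λ,R)`-linearly
locally contractible is `(λ',R)`-linearly locally connected for every `λ' > λ`. -/
theorem llContractible_implies_llc
    (X : Type) [MetricSpace X] [ProperSpace X]
    (hhomeo : Nonempty (X ≃ₜ E2))
    (lam R : ℝ) (hlam : 1 ≤ lam) (hR : 0 < R)
    (h : LinearlyLocallyContractible X lam R) :
    ∀ lam' : ℝ, lam < lam' → LinearlyLocallyConnected X lam' R := by
  intro lam' hlam'
  have hlam0 : (0:ℝ) < lam := lt_of_lt_of_le zero_lt_one hlam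
  have hlam'0 : (0:ℝ) < lam' := hlam0.trans hlam'
  obtain ⟨φ0⟩ := hhomeo
  let ψ : X ≃ₜ ℂ := φ0.trans (((EuclideanSpace.equiv (Fin 2) ℝ).toHomeomorph).trans
    ((Homeomorph.piFinTwo (fun _ => ℝ)).trans Complex.equivRealProdCLM.toHomeomorph.symm))
  constructor
  · -- LLC1
    intro x r hr hrR y hy z hz
    obtain ⟨hsub, c, ⟨G⟩⟩ := h x r hr hrR
    set py : unitInterval → X := fun τ => ((G (τ, ⟨y, hy⟩) : ↥(ball x (lam * r))) : X)
      with hpy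
    set pz : unitInterval → X := fun τ => ((G (τ, ⟨z, hz⟩) : ↥(ball x (lam * r))) : X)
      with hpz
    have hpyc : Continuous py := by
      apply continuous_subtype_val.comp
      exact G.continuous.comp (continuous_id.prodMk continuous_const)
    have hpzc : Continuous pz := by
      apply continuous_subtype_val.comp
      exact G.continuous.comp (continuous_id.prodMk continuous_const)
    have hpy0 : py 0 = y := by
      rw [hpy]; simp only [G.apply_zero]; rfl
    have hpz0 : pz 0 = z := by
      rw [hpz]; simp only [G.apply_zero]; rfl
    have hpy1 : py 1 = (c : X) := by
      rw [hpy]; simp only [G.apply_one]; rfl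
    have hpz1 : pz 1 = (c : X) := by
      rw [hpz]; simp only [G.apply_one]; rfl
    refine ⟨Set.range py ∪ Set.range pz, ?_, ?_, ?_, ?_, ?_⟩
    · exact (isCompact_range hpyc).union (isCompact_range hpzc)
    · refine IsConnected.union ⟨(c : X), ?_, ?_⟩
        (isConnected_range hpyc) (isConnected_range hpzc)
      · exact ⟨1, hpy1⟩
      · exact ⟨1, hpz1⟩
    · rintro w (⟨τ, rfl⟩ | ⟨τ, rfl⟩) <;>
      · refine ball_subset_ball ?_ (Subtype.mem _)
        exact mul_le_mul_of_nonneg_right hlam'.le hr.le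
    · exact Or.inl ⟨0, hpy0⟩
    · exact Or.inr ⟨0, hpz0⟩
  · -- LLC2
    intro x r hr hrR y hy z hz
    set s : ℝ := r / lam' with hs
    have hs0 : (0:ℝ) < s := by positivity
    set t : ℝ := r / lam with ht
    have ht0 : (0:ℝ) < t := by positivity
    have htR : t ≤ R := le_trans (by
      rw [ht, div_le_iff₀ hlam0]
      nlinarith) hrR
    have hst : s < t := by
      rw [hs, ht]
      exact div_lt_div_of_pos_left hr hlam0 hlam'
    have hsr : s < r := by
      rw [hs, div_lt_iff₀ hlam'0]
      nlinarith [hlam.trans hlam'.le]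
    obtain ⟨hsub, c, ⟨G⟩⟩ := h x t ht0 htR
    have hlamt : lam * t = r := by
      rw [ht]; field_simp
    set K : Set ℂ := ψ '' (closedBall x s) with hK
    have hKcpt : IsCompact K := (isCompact_closedBall x s).image ψ.continuous
    -- membership facts
    have hsymm_mem : ∀ a : ↥K, ψ.symm (a : ℂ) ∈ ball x t := by
      rintro ⟨a, w, hw, rfl⟩
      rw [Homeomorph.symm_apply_apply]
      exact lt_of_le_of_lt hw hst
    have hziK : ∀ p : X, p ∉ ball x r → ψ p ∉ K := by
      rintro p hp ⟨w, hw, hww⟩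
      apply hp
      have : w = p := ψ.injective hww
      rw [← this]
      exact lt_of_le_of_lt hw hsr
    -- the homotopy on K
    set H : C(unitInterval × ↥K, ℂ) :=
      ⟨fun p => ψ ((G (unitInterval.symm p.1, ⟨ψ.symm (p.2 : ℂ), hsymm_mem p.2⟩) :
          ↥(ball x (lam * t))) : X), by
        apply ψ.continuous.comp
        apply continuous_subtype_val.comp
        apply G.continuous.comp
        apply Continuous.prodMk
        · exact unitInterval.continuous_symm.comp continuous_fst
        · exact ((ψ.symm.continuous.comp
            (continuous_subtype_val.comp continuous_snd)).subtype_mk _)⟩ with hH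
    have hHmem : ∀ p, H p ∈ ψ '' (ball x r) := by
      intro p
      rw [hH]
      exact ⟨_, by rw [← hlamt]; exact Subtype.mem _, rfl⟩
    have hHne : ∀ (p₁ : X), p₁ ∉ ball x r → ∀ p, H p ≠ ψ p₁ := by
      intro p₁ hp₁ p hcon
      obtain ⟨w, hw, hww⟩ := hHmem p
      rw [hcon] at hww
      exact hp₁ (ψ.injective hww ▸ hw)
    have hH0 : ∀ a : ↥K, H (0, a) = ψ ((c : X)) := by
      intro a
      rw [hH]
      simp only [ContinuousMap.coe_mk]
      rw [show unitInterval.symm 0 = 1 from by simp]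
      rw [G.apply_one]
      rfl
    have hH1 : ∀ a : ↥K, H (1, a) = (a : ℂ) := by
      intro a
      rw [hH]
      simp only [ContinuousMap.coe_mk]
      rw [show unitInterval.symm 1 = 0 from by simp]
      rw [G.apply_zero]
      show ψ (ψ.symm (a : ℂ)) = (a : ℂ)
      rw [Homeomorph.apply_symm_apply]
    -- both components are unbounded
    have hunbdd : ∀ p : X, p ∉ ball x r →
        ¬ Bornology.IsBounded (connectedComponentIn Kᶜ (ψ p)) := by
      intro p hp
      exact bounded_component_absurd K hKcpt (ψ p) (hziK p hp) H (ψ ((c : X)))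
        (hHne p hp) hH0 hH1
    -- both are in the same component
    obtain ⟨M₀, hM₀pos, hM₀⟩ := hKcpt.isBounded.subset_ball_lt 0 0
    set S : Set ℂ := {w : ℂ | M₀ < ‖w‖} with hSdef
    have hSK : S ⊆ Kᶜ := by
      intro w hwS hwK
      have := hM₀ hwK
      rw [mem_ball, dist_zero_right] at this
      have hwS' : M₀ < ‖w‖ := hwS
      linarith
    have hSpc : IsPathConnected S := isPathConnected_norm_gt M₀ hM₀pos
    have hSne : S.Nonempty := (isPathConnected_iff.mp hSpc).1
    have hcompS : ∀ p : X, p ∉ ball x r →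
        S ⊆ connectedComponentIn Kᶜ (ψ p) := by
      intro p hp
      have hunb := hunbdd p hp
      have : ¬ (connectedComponentIn Kᶜ (ψ p) ⊆ closedBall 0 M₀) := by
        intro hcon
        exact hunb ((Metric.isBounded_closedBall).subset hcon)
      obtain ⟨w, hw1, hw2⟩ := not_subset.mp this
      have hwS : w ∈ S := by
        show M₀ < ‖w‖
        simp only [mem_closedBall, dist_zero_right, not_le] at hw2
        exact hw2
      have heq := connectedComponentIn_eq hw1
      rw [heq]
      exact hSpc.isConnected.isPreconnected.subset_connectedComponentIn hwS hSK
    obtain ⟨w₀, hw₀⟩ := hSne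
    have hyS := hcompS y hy
    have hzS := hcompS z hz
    set V := connectedComponentIn Kᶜ (ψ y) with hV
    have hzyV : ψ z ∈ V := by
      have h1 : ψ z ∈ connectedComponentIn Kᶜ (ψ z) :=
        mem_connectedComponentIn (by simpa using hziK z hz)
      have h2 := connectedComponentIn_eq (hyS hw₀)
      have h3 := connectedComponentIn_eq (hzS hw₀)
      rw [hV, h2, ← h3]
      exact h1
    have hyV : ψ y ∈ V := mem_connectedComponentIn (by simpa using hziK y hy)
    have hVopen : IsOpen V := hKcpt.isClosed.isOpen_compl.connectedComponentIn
    have hVconn : IsConnected V := by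
      rw [hV, isConnected_connectedComponentIn_iff]
      simpa using hziK y hy
    have hVpc : IsPathConnected V := (hVopen.isConnected_iff_isPathConnected).mp hVconn
    obtain ⟨γ, hγ⟩ := hVpc.joinedIn _ hyV _ hzyV
    refine ⟨ψ.symm '' (Set.range γ), ?_, ?_, ?_, ?_, ?_⟩
    · exact (isCompact_range γ.continuous).image ψ.symm.continuous
    · exact ((isConnected_range γ.continuous).image _ ψ.symm.continuous.continuousOn)
    · rintro w ⟨u, ⟨τ, rfl⟩, rfl⟩
      intro hcon
      have h1 : γ τ ∈ Kᶜ := connectedComponentIn_subset _ _ (hγ τ)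
      apply h1
      rw [hK]
      refine ⟨ψ.symm (γ τ), ?_, by rw [Homeomorph.apply_symm_apply]⟩
      exact ball_subset_closedBall hcon
    · exact ⟨ψ y, ⟨0, by simp⟩, by rw [Homeomorph.symm_apply_apply]⟩
    · exact ⟨ψ z, ⟨1, by simp⟩, by rw [Homeomorph.symm_apply_apply]⟩
end
end

section
/- Let λ > 1 + √2 and δ ∈ (0,1). Set K = 4/λ + 2/λ² and ε = (δ+1)²/(δ² + K·δ + 1) − 1. Then ε > 0, and for all real numbers l₁, l₂, d satisfying 0 < δ·l₂ ≤ l₁ ≤ l₂ and 0 ≤ λ·d < l₁, one has (l₁+d)² + (l₂+d)² ≤ (1/(1+ε))·(l₁+l₂)². -/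
/-- Quantitative core of Lemma 3.1: with `K = 4/λ + 2/λ²` and
`ε = (δ+1)²/(δ² + K·δ + 1) − 1`, one has `ε > 0`, and for all `l₁, l₂, d` with
`0 < δ·l₂ ≤ l₁ ≤ l₂` and `0 ≤ λ·d < l₁`,
`(l₁+d)² + (l₂+d)² ≤ (1/(1+ε))·(l₁+l₂)²`. -/
theorem chord_arc_quantitative (lam δ K ε : ℝ)
    (hlam : 1 + Real.sqrt 2 < lam) (hδ0 : 0 < δ) (hδ1 : δ < 1)
    (hK : K = 4 / lam + 2 / lam ^ 2)
    (hε : ε = (δ + 1) ^ 2 / (δ ^ 2 + K * δ + 1) - 1) :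
    0 < ε ∧
      ∀ l₁ l₂ d : ℝ, 0 < δ * l₂ → δ * l₂ ≤ l₁ → l₁ ≤ l₂ →
        0 ≤ lam * d → lam * d < l₁ →
        (l₁ + d) ^ 2 + (l₂ + d) ^ 2 ≤ (1 / (1 + ε)) * (l₁ + l₂) ^ 2 := by
  have hs2 : Real.sqrt 2 ^ 2 = 2 := Real.sq_sqrt (by norm_num)
  have hs2n : 0 ≤ Real.sqrt 2 := Real.sqrt_nonneg 2
  have hlam0 : 0 < lam := by nlinarith
  -- λ² - 2λ - 1 > 0
  have hquad : lam ^ 2 - 2 * lam - 1 > 0 := by nlinarith [sq_nonneg (lam - 1 - Real.sqrt 2)]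
  have hK0 : 0 < K := by
    rw [hK]; positivity
  have hK2 : K < 2 := by
    rw [hK]
    rw [div_add_div _ _ (ne_of_gt hlam0) (by positivity), div_lt_iff₀ (by positivity)]
    nlinarith
  have hD : 0 < δ ^ 2 + K * δ + 1 := by positivity
  have hεpos : 0 < ε := by
    rw [hε, sub_pos, lt_div_iff₀ hD]
    nlinarith
  refine ⟨hεpos, fun l₁ l₂ d h0 h1 h2 hd0 hd1 => ?_⟩
  have hl₁ : 0 < l₁ := lt_of_lt_of_le h0 h1
  have hl₂ : 0 < l₂ := lt_of_lt_of_le hl₁ h2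
  have hdnn : 0 ≤ d := nonneg_of_mul_nonneg_right hd0 hlam0
  -- Step 1: (l₁+d)² + (l₂+d)² ≤ l₁² + K l₁ l₂ + l₂²
  have step1 : (l₁ + d) ^ 2 + (l₂ + d) ^ 2 ≤ l₁ ^ 2 + K * (l₁ * l₂) + l₂ ^ 2 := by
    have hKeq : K * lam ^ 2 = 4 * lam + 2 := by
      rw [hK]; field_simp
    have hu : lam * d ≤ l₁ := le_of_lt hd1
    have key : lam ^ 2 * ((l₁ + d) ^ 2 + (l₂ + d) ^ 2) ≤
        lam ^ 2 * (l₁ ^ 2 + K * (l₁ * l₂) + l₂ ^ 2) := by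
      nlinarith [mul_le_mul_of_nonneg_right hu (le_of_lt hl₂),
        mul_le_mul_of_nonneg_right hu (le_of_lt hl₁),
        mul_le_mul_of_nonneg_left h2 (le_of_lt hl₁),
        mul_self_le_mul_self hd0 hu,
        mul_le_mul_of_nonneg_left h2 (mul_nonneg (le_of_lt hlam0) hdnn),
        sq_nonneg (lam * d), mul_pos hl₁ hl₂]
    exact le_of_mul_le_mul_left key (by positivity)
  -- Step 2: (δ+1)² (l₁² + K l₁ l₂ + l₂²) ≤ (δ² + Kδ + 1) (l₁+l₂)²
  have step2 : (δ + 1) ^ 2 * (l₁ ^ 2 + K * (l₁ * l₂) + l₂ ^ 2) ≤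
      (δ ^ 2 + K * δ + 1) * (l₁ + l₂) ^ 2 := by
    have h3 : 0 ≤ l₁ - δ * l₂ := by linarith
    have h4 : 0 ≤ l₂ - δ * l₁ := by nlinarith
    have key : (δ ^ 2 + K * δ + 1) * (l₁ + l₂) ^ 2 -
        (δ + 1) ^ 2 * (l₁ ^ 2 + K * (l₁ * l₂) + l₂ ^ 2) =
        (2 - K) * ((l₁ - δ * l₂) * (l₂ - δ * l₁)) := by ring
    have hn : 0 ≤ (2 - K) * ((l₁ - δ * l₂) * (l₂ - δ * l₁)) :=
      mul_nonneg (by linarith) (mul_nonneg h3 h4)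
    linarith
  have h1ε : 1 + ε = (δ + 1) ^ 2 / (δ ^ 2 + K * δ + 1) := by rw [hε]; ring
  rw [h1ε, one_div_div, div_mul_eq_mul_div, le_div_iff₀ (by positivity)]
  calc ((l₁ + d) ^ 2 + (l₂ + d) ^ 2) * (δ + 1) ^ 2
      ≤ (l₁ ^ 2 + K * (l₁ * l₂) + l₂ ^ 2) * (δ + 1) ^ 2 :=
        mul_le_mul_of_nonneg_right step1 (by positivity)
    _ ≤ (δ ^ 2 + K * δ + 1) * (l₁ + l₂) ^ 2 := by linarith [step2]
end

section
/- Let R = e^{−(1+√5)/2}. The function f : [0,R] → [0,∞) defined by f(0) = 0 and f(r) = r·log(1/r)·(1 + log(1/r)) for r ∈ (0,R] is an admissible density; that is: (a) f is continuous, monotone increasing, and f(0) = 0; (b) f(r) ≥ r for all r ∈ [0,R]; (c) for all r ∈ (0,1], lim_{α→0⁺} f(αr)/(r·f(α)) = 1, and this convergence is uniform in r on each compact subset of (0,1]. -/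
open Metric MeasureTheory Set Filter

noncomputable section

/-- `γ` is an absolutely continuous path on `[a, b]`: it is continuous, its (a.e. defined)
derivative has integrable norm, and the fundamental theorem of calculus holds on every
subinterval. -/
def IsACOn (γ : ℝ → E2) (a b : ℝ) : Prop :=
  ContinuousOn γ (Set.Icc a b) ∧
  IntervalIntegrable (fun t => ‖deriv γ t‖) volume a b ∧
  ∀ s t : ℝ, s ∈ Set.Icc a b → t ∈ Set.Icc a b → s ≤ t →
    γ t - γ s = ∫ u in s..t, deriv γ u

/-- The speed of a point at position `p` with velocity `v` with respect to the singular
Riemannian metric `dr² + f(r)²·dθ²` written in Cartesian coordinates: for `p ≠ 0` the radial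
speed is `⟪p,v⟫/‖p‖` and the angular speed is `θ' = (p₁v₂ − p₂v₁)/‖p‖²`; at the origin the
radial speed is `‖v‖` (this value is only relevant on a null set for absolutely continuous
paths, and summing lengths over the subintervals avoiding the origin gives the same value). -/
def warpedSpeed (f : ℝ → ℝ) (p v : E2) : ℝ :=
  if ‖p‖ = 0 then ‖v‖
  else Real.sqrt (((inner ℝ p v : ℝ) / ‖p‖) ^ 2 +
    (f ‖p‖) ^ 2 * ((p 0 * v 1 - p 1 * v 0) / ‖p‖ ^ 2) ^ 2)

/-- The length of the path `γ : [a,b] → ℝ²` with respect to `dr² + f(r)²·dθ²`. -/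
def warpedLength (f : ℝ → ℝ) (γ : ℝ → E2) (a b : ℝ) : ℝ :=
  ∫ t in a..b, warpedSpeed f (γ t) (deriv γ t)

/-- The induced length distance on the closed disk of radius `Rad`: the infimum of
warped lengths of absolutely continuous paths joining `x` to `y` inside the disk. -/
def warpedDist (f : ℝ → ℝ) (Rad : ℝ) (x y : E2) : ℝ :=
  sInf { L : ℝ | ∃ (γ : ℝ → E2) (a b : ℝ), a ≤ b ∧ IsACOn γ a b ∧
    γ a = x ∧ γ b = y ∧ (∀ t ∈ Set.Icc a b, ‖γ t‖ ≤ Rad) ∧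
    L = warpedLength f γ a b }

/-- `f : [0,R] → [0,∞)` is an admissible density: continuous, monotone increasing with
`f 0 = 0`, satisfying `f r ≥ r`, and `f(αr)/(r·f(α)) → 1` as `α → 0⁺` for each `r ∈ (0,1]`,
uniformly on each compact subset `[k,1] ⊆ (0,1]`. -/
def IsAdmissibleDensity (f : ℝ → ℝ) (R : ℝ) : Prop :=
  0 < R ∧
  ContinuousOn f (Set.Icc 0 R) ∧
  MonotoneOn f (Set.Icc 0 R) ∧
  f 0 = 0 ∧
  (∀ r ∈ Set.Icc (0 : ℝ) R, r ≤ f r) ∧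
  (∀ r ∈ Set.Ioc (0 : ℝ) 1,
    Tendsto (fun α => f (α * r) / (r * f α)) (nhdsWithin 0 (Set.Ioi 0)) (nhds 1)) ∧
  (∀ k ∈ Set.Ioc (0 : ℝ) 1,
    TendstoUniformlyOn (fun α r => f (α * r) / (r * f α)) (fun _ => 1)
      (nhdsWithin 0 (Set.Ioi 0)) (Set.Icc k 1))


private lemma rlsq_fEq :
    (fun r : ℝ => r * Real.log (1 / r) * (1 + Real.log (1 / r))) =
      fun r : ℝ => r * (Real.log r) ^ 2 - r * Real.log r := by
  funext r
  rw [one_div, Real.log_inv]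
  ring

private lemma rlsq_hasDerivAt {r : ℝ} (hr : r ≠ 0) :
    HasDerivAt (fun r : ℝ => r * (Real.log r) ^ 2 - r * Real.log r)
      ((Real.log r) ^ 2 + Real.log r - 1) r := by
  have h1 := Real.hasDerivAt_log hr
  have h2 := ((hasDerivAt_id r).mul (h1.pow 2)).sub ((hasDerivAt_id r).mul h1)
  refine h2.congr_deriv ?_
  simp only [id, Pi.pow_apply]
  field_simp
  ring

private lemma rlsq_contOn :
    ContinuousOn (fun r : ℝ => r * (Real.log r) ^ 2 - r * Real.log r)
      (Set.Icc 0 (Real.exp (-(1 + Real.sqrt 5) / 2))) := by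
  intro x hx
  rcases eq_or_lt_of_le hx.1 with h0 | h0
  · have h0 : x = 0 := h0.symm
    subst h0
    apply ContinuousWithinAt.mono _ Icc_subset_Ici_self
    rw [← continuousWithinAt_Ioi_iff_Ici]
    have hneg : Tendsto (fun r : ℝ => -Real.log r) (nhdsWithin 0 (Set.Ioi 0)) atTop :=
      tendsto_neg_atBot_atTop.comp Real.tendsto_log_nhdsGT_zero
    have hcomp : Tendsto
        ((fun x : ℝ => x ^ 2 * Real.exp (-x) + x ^ 1 * Real.exp (-x)) ∘ fun r => -Real.log r)
        (nhdsWithin 0 (Set.Ioi 0)) (nhds 0) := by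
      have := ((Real.tendsto_pow_mul_exp_neg_atTop_nhds_zero 2).add
        (Real.tendsto_pow_mul_exp_neg_atTop_nhds_zero 1)).comp hneg
      simpa using this
    have heq : ∀ r ∈ Set.Ioi (0 : ℝ),
        ((fun x : ℝ => x ^ 2 * Real.exp (-x) + x ^ 1 * Real.exp (-x)) ∘ fun r => -Real.log r) r
          = r * (Real.log r) ^ 2 - r * Real.log r := by
      intro r hr
      simp only [Function.comp, neg_neg, Real.exp_log hr, pow_one]
      ring
    have : Tendsto (fun r : ℝ => r * (Real.log r) ^ 2 - r * Real.log r)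
        (nhdsWithin 0 (Set.Ioi 0)) (nhds 0) := by
      refine hcomp.congr' ?_
      filter_upwards [self_mem_nhdsWithin] with r hr using heq r hr
    rw [ContinuousWithinAt]
    convert this using 2
    simp
  · have : ContinuousAt (fun r : ℝ => r * (Real.log r) ^ 2 - r * Real.log r) x :=
      (continuousAt_id.mul ((Real.continuousAt_log h0.ne').pow 2)).sub
        (continuousAt_id.mul (Real.continuousAt_log h0.ne'))
    exact this.continuousWithinAt


private lemma rlsq_unif {k : ℝ} (hk : k ∈ Set.Ioc (0:ℝ) 1) :
    TendstoUniformlyOn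
      (fun α r => (fun r : ℝ => r * Real.log (1 / r) * (1 + Real.log (1 / r))) (α * r) /
        (r * (fun r : ℝ => r * Real.log (1 / r) * (1 + Real.log (1 / r))) α))
      (fun _ => 1) (nhdsWithin 0 (Set.Ioi 0)) (Set.Icc k 1) := by
  rw [Metric.tendstoUniformlyOn_iff]
  intro ε hε
  set K : ℝ := -Real.log k with hKdef
  have hK : 0 ≤ K := neg_nonneg.2 (Real.log_nonpos hk.1.le hk.2)
  set M : ℝ := max 1 ((K ^ 2 + 3 * K + 1) / ε) with hMdef
  have hM1 : 1 ≤ M := le_max_left _ _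
  have hεM : K ^ 2 + 3 * K + 1 ≤ ε * M := by
    have h2 : (K ^ 2 + 3 * K + 1) / ε ≤ M := le_max_right _ _
    rw [div_le_iff₀ hε] at h2
    linarith
  filter_upwards [Ioo_mem_nhdsGT_of_mem
    (show (0:ℝ) ∈ Set.Ico 0 (Real.exp (-M)) from ⟨le_refl _, Real.exp_pos _⟩)] with α hα
  intro r hr
  have hα0 : 0 < α := hα.1
  have hr0 : 0 < r := lt_of_lt_of_le hk.1 hr.1
  set a : ℝ := Real.log α with hadef
  set b : ℝ := Real.log r with hbdef
  have ha1 : a < -M := by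
    have := Real.log_lt_log hα0 hα.2
    rwa [Real.log_exp] at this
  have ha0 : a < 0 := by linarith
  have hb1 : -K ≤ b := by
    have := Real.log_le_log hk.1 hr.1
    simp only [hKdef, neg_neg]; exact this
  have hb2 : b ≤ 0 := Real.log_nonpos hr0.le hr.2
  have hD : (0:ℝ) < a ^ 2 - a := by nlinarith
  have hratio : (α * r) * Real.log (1 / (α * r)) * (1 + Real.log (1 / (α * r))) /
      (r * (α * Real.log (1 / α) * (1 + Real.log (1 / α)))) =
      ((a + b) ^ 2 - (a + b)) / (a ^ 2 - a) := by
    rw [one_div, one_div, Real.log_inv, Real.log_inv, Real.log_mul hα0.ne' hr0.ne']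
    have hden : (0:ℝ) < r * (α * -a * (1 + -a)) :=
      mul_pos hr0 (mul_pos (mul_pos hα0 (by linarith)) (by linarith))
    rw [div_eq_div_iff hden.ne' hD.ne']
    ring
  rw [Real.dist_eq, hratio]
  have key : |1 - ((a + b) ^ 2 - (a + b)) / (a ^ 2 - a)| =
      ((2 * a * b + b ^ 2 - b)) / (a ^ 2 - a) := by
    rw [abs_of_nonpos, neg_sub]
    · rw [div_sub_one hD.ne']; ring_nf
    · rw [sub_nonpos, le_div_iff₀ hD]
      nlinarith [mul_nonneg (neg_nonneg.2 hb2) (neg_nonneg.2 ha0.le)]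
  rw [key, div_lt_iff₀ hD]
  have hKb : 0 ≤ K + b := by linarith
  have p1 : 0 ≤ (K + b) * (-a) := mul_nonneg hKb (by linarith)
  have p2 : 0 ≤ (K + b) * (K - b) := mul_nonneg hKb (by linarith)
  have p3 : 0 ≤ K * (-a - 1) := mul_nonneg hK (by linarith)
  have p4 : 0 ≤ K ^ 2 * (-a - 1) := mul_nonneg (sq_nonneg K) (by linarith)
  have p5 : 0 ≤ ε * ((-a) - M) * (-a) := mul_nonneg (mul_nonneg hε.le (by linarith)) (by linarith)
  have p6 : 0 ≤ (ε * M - (K ^ 2 + 3 * K + 1)) * (-a) := mul_nonneg (by linarith) (by linarith)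
  have p7 : 0 < ε * (-a) := mul_pos hε (by linarith)
  nlinarith [p1, p2, p3, p4, p5, p6, p7]

/-- Lemma 4.1, second part: `f(r) = r·log(1/r)·(1 + log(1/r))` is an admissible density on
`[0, e^{−(1+√5)/2}]`. -/
theorem rLogOneDivRSq_isAdmissibleDensity :
    IsAdmissibleDensity (fun r => r * Real.log (1 / r) * (1 + Real.log (1 / r)))
      (Real.exp (-(1 + Real.sqrt 5) / 2)) := by
  have hs : Real.sqrt 5 ^ 2 = 5 := Real.sq_sqrt (by norm_num)
  have hs0 : (0:ℝ) ≤ Real.sqrt 5 := Real.sqrt_nonneg 5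
  have hs2 : (2:ℝ) ≤ Real.sqrt 5 := by nlinarith [hs, hs0]
  refine ⟨Real.exp_pos _, ?_, ?_, by simp, ?_, ?_, fun k hk => rlsq_unif hk⟩
  · rw [rlsq_fEq]; exact rlsq_contOn
  · rw [rlsq_fEq]
    refine (strictMonoOn_of_deriv_pos (convex_Icc _ _) rlsq_contOn ?_).monotoneOn
    intro x hx
    rw [interior_Icc] at hx
    rw [(rlsq_hasDerivAt hx.1.ne').deriv]
    have hl : Real.log x < -(1 + Real.sqrt 5) / 2 := by
      have := Real.log_lt_log hx.1 hx.2
      rwa [Real.log_exp] at this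
    nlinarith [hs, hs0,
      mul_pos (show (0:ℝ) < -(2 * Real.log x + 1) - Real.sqrt 5 by linarith)
        (show (0:ℝ) < -(2 * Real.log x + 1) + Real.sqrt 5 by linarith)]
  · intro r hr
    show r ≤ r * Real.log (1 / r) * (1 + Real.log (1 / r))
    have heq : r * Real.log (1 / r) * (1 + Real.log (1 / r)) =
        r * (Real.log r) ^ 2 - r * Real.log r := by
      rw [one_div, Real.log_inv]; ring
    rw [heq]
    rcases eq_or_lt_of_le hr.1 with h0 | h0
    · simp [← h0]
    · have hl : Real.log r ≤ -(1 + Real.sqrt 5) / 2 := by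
        have := Real.log_le_log h0 hr.2
        rwa [Real.log_exp] at this
      have hl1 : Real.log r ≤ -1 := by linarith
      nlinarith [mul_nonneg h0.le (mul_nonneg (show (0:ℝ) ≤ -Real.log r - 1 by linarith)
        (show (0:ℝ) ≤ 1 - Real.log r by linarith)),
        mul_nonneg h0.le (show (0:ℝ) ≤ -Real.log r by linarith)]
  · intro r hr
    exact (rlsq_unif hr).tendsto_at ⟨le_refl r, hr.2⟩
end
end

section
/- Let f : [0,R] → [0,∞) be an admissible density. Then there exists a constant C > 0, independent of r, such that f(r) ≤ C·f(r/2) for all r ∈ (0,R]. -/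
open Metric MeasureTheory Set Filter

noncomputable section

/-- Lemma 4.3(3), sphere-length doubling: for an admissible density `f` there is a constant
`C > 0`, independent of `r`, such that `f(r) ≤ C·f(r/2)` for all `r ∈ (0,R]`. -/
theorem admissibleDensity_doubling
    (f : ℝ → ℝ) (R : ℝ) (hf : IsAdmissibleDensity f R) :
    ∃ C : ℝ, 0 < C ∧ ∀ r ∈ Set.Ioc (0 : ℝ) R, f r ≤ C * f (r / 2) := by
  obtain ⟨hR, hcont, hmono, hf0, hge, hptw, _⟩ := hf
  have h2 : (1:ℝ)/2 ∈ Set.Ioc (0:ℝ) 1 := by norm_num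
  have hev : ∀ᶠ α in nhdsWithin 0 (Set.Ioi 0),
      (1:ℝ)/2 < f (α * (1/2)) / ((1/2) * f α) :=
    (hptw (1/2) h2).eventually (eventually_gt_nhds (by norm_num))
  rw [Filter.eventually_iff, Metric.mem_nhdsWithin_iff] at hev
  obtain ⟨δ₀, hδ₀, hδev⟩ := hev
  set δ : ℝ := min δ₀ R with hδdef
  have hδpos : 0 < δ := lt_min hδ₀ hR
  have hδR : δ ≤ R := min_le_right _ _
  refine ⟨max 4 (2 * f R / δ), lt_of_lt_of_le (by norm_num) (le_max_left _ _), ?_⟩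
  intro r hr
  obtain ⟨hr0, hrR⟩ := hr
  have hrIcc : r ∈ Set.Icc (0:ℝ) R := ⟨hr0.le, hrR⟩
  have hr2Icc : r / 2 ∈ Set.Icc (0:ℝ) R := ⟨by linarith, by linarith⟩
  have hfr2nn : 0 ≤ f (r / 2) := le_trans (by linarith) (hge _ hr2Icc)
  by_cases hcase : r < δ
  · -- small r: use the limit
    have hmem : r ∈ Set.Ioi (0:ℝ) := hr0
    have hdist : dist r 0 < δ₀ := by
      rw [Real.dist_eq, sub_zero, abs_of_pos hr0]
      exact lt_of_lt_of_le hcase (min_le_left _ _)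
    have hratio : (1:ℝ)/2 < f (r * (1/2)) / ((1/2) * f r) :=
      hδev ⟨Metric.mem_ball.mpr hdist, hmem⟩
    have hfrpos : 0 < f r := lt_of_lt_of_le hr0 (hge r hrIcc)
    have hden : (0:ℝ) < (1/2) * f r := by linarith
    have h' : (1/2) * ((1/2) * f r) < f (r * (1/2)) := (lt_div_iff₀ hden).mp hratio
    have hrw : r * (1/2) = r / 2 := by ring
    rw [hrw] at h'
    have h4 : f r ≤ 4 * f (r / 2) := by linarith
    calc f r ≤ 4 * f (r / 2) := h4
      _ ≤ max 4 (2 * f R / δ) * f (r / 2) :=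
        mul_le_mul_of_nonneg_right (le_max_left _ _) hfr2nn
  · -- large r: use monotonicity
    push_neg at hcase
    have hfRpos : 0 < f R := lt_of_lt_of_le hR (hge R ⟨hR.le, le_refl R⟩)
    have hfrR : f r ≤ f R := hmono hrIcc ⟨hR.le, le_refl R⟩ hrR
    have hδ2Icc : δ / 2 ∈ Set.Icc (0:ℝ) R := ⟨by linarith, by linarith⟩
    have hfδ2 : δ / 2 ≤ f (δ / 2) := hge _ hδ2Icc
    have hfmono2 : f (δ / 2) ≤ f (r / 2) := hmono hδ2Icc hr2Icc (by linarith)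
    have hkey : 2 * f R / δ * (δ / 2) = f R := by
      field_simp
    have hCge : 2 * f R / δ ≤ max 4 (2 * f R / δ) := le_max_right _ _
    have hCpos : (0:ℝ) ≤ 2 * f R / δ := by positivity
    have h1 : f R ≤ 2 * f R / δ * f (r / 2) := by
      calc f R = 2 * f R / δ * (δ / 2) := hkey.symm
        _ ≤ 2 * f R / δ * f (r / 2) :=
          mul_le_mul_of_nonneg_left (by linarith) hCpos
    calc f r ≤ f R := hfrR
      _ ≤ 2 * f R / δ * f (r / 2) := h1
      _ ≤ max 4 (2 * f R / δ) * f (r / 2) :=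
        mul_le_mul_of_nonneg_right hCge hfr2nn
end
end

section
/- Let X be a complete metric space, let K ⊂ 𝔻̄ (the closed unit disk in ℝ²) be compact, and set Ω = 𝔻∖K, where 𝔻 is the open unit disk. Let u : 𝔻̄ → X be continuous with ℋ¹(u(K)) = 0 (Hausdorff 1-measure in X). Suppose ρ : Ω → [0,∞] is a Borel function satisfying the upper gradient inequality on Ω: for every absolutely continuous path γ : [a,b] → Ω, d(u(γ(a)), u(γ(b))) ≤ ∫ₐᵇ ρ(γ(t))·‖γ'(t)‖ dt. Define ρ̃ : 𝔻 → [0,∞] by ρ̃ = ρ on Ω and ρ̃ = 0 on K ∩ 𝔻. Then ρ̃ satisfies the upper gradient inequality on all of 𝔻: for every absolutely continuous path γ : [a,b] → 𝔻, d(u(γ(a)), u(γ(b))) ≤ ∫ₐᵇ ρ̃(γ(t))·‖γ'(t)‖ dt. -/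
open Metric MeasureTheory Set Filter

noncomputable section

/-- Lemma 6.1 (core): let `X` be a complete metric space, `K ⊆ 𝔻̄` compact,
`Ω = 𝔻 ∖ K`, and `u : 𝔻̄ → X` continuous with `ℋ¹(u(K)) = 0`. If the Borel function
`ρ : Ω → [0,∞]` satisfies the upper gradient inequality on `Ω`, then its zero-extension
`ρ̃` (equal to `ρ` on `Ω` and `0` elsewhere) satisfies the upper gradient inequality for
all absolutely continuous paths in `𝔻`. -/
theorem zero_extension_upper_gradient
    (X : Type) [MetricSpace X] [CompleteSpace X] [MeasurableSpace X] [BorelSpace X]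
    (K : Set E2) (hKcomp : IsCompact K) (hKsub : K ⊆ Metric.closedBall (0 : E2) 1)
    (u : E2 → X) (huc : ContinuousOn u (Metric.closedBall (0 : E2) 1))
    (huK : μH[1] (u '' K) = 0)
    (ρ : E2 → ENNReal) (hρmeas : Measurable ρ)
    (hρ : ∀ (γ : ℝ → E2) (a b : ℝ), a ≤ b → IsACOn γ a b →
      (∀ t ∈ Set.Icc a b, γ t ∈ Metric.ball (0 : E2) 1 \ K) →
      ENNReal.ofReal (dist (u (γ a)) (u (γ b))) ≤
        ∫⁻ t in Set.Icc a b, ρ (γ t) * ENNReal.ofReal ‖deriv γ t‖) :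
    ∀ (γ : ℝ → E2) (a b : ℝ), a ≤ b → IsACOn γ a b →
      (∀ t ∈ Set.Icc a b, γ t ∈ Metric.ball (0 : E2) 1) →
      ENNReal.ofReal (dist (u (γ a)) (u (γ b))) ≤
        ∫⁻ t in Set.Icc a b,
          (Metric.ball (0 : E2) 1 \ K).indicator ρ (γ t) * ENNReal.ofReal ‖deriv γ t‖ := by
  intro γ a b hab hAC hball
  set Om : Set E2 := Metric.ball (0 : E2) 1 \ K with hOm
  set v : ℝ → X := fun t => u (γ t) with hv
  set F : ℝ → ℝ := fun t => dist (v a) (v t) with hFdef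
  have hγc : ContinuousOn γ (Set.Icc a b) := hAC.1
  have hγsub : Set.MapsTo γ (Set.Icc a b) (Metric.closedBall (0 : E2) 1) :=
    fun t ht => Metric.ball_subset_closedBall (hball t ht)
  have hvc : ContinuousOn v (Set.Icc a b) := huc.comp hγc hγsub
  have hFc : ContinuousOn F (Set.Icc a b) :=
    ((LipschitzWith.dist_right (v a)).continuous).comp_continuousOn hvc
  -- the relatively open "good" set
  set G : Set ℝ := Set.Ioo a b ∩ γ ⁻¹' Om with hGdef
  have hOmopen : IsOpen Om := (Metric.isOpen_ball).sdiff hKcomp.isClosed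
  have hGopen : IsOpen G :=
    (hγc.mono Set.Ioo_subset_Icc_self).isOpen_inter_preimage isOpen_Ioo hOmopen
  have hGsub : G ⊆ Set.Icc a b := fun t ht => Set.Ioo_subset_Icc_self ht.1
  -- key estimate on any ord-connected subset of G
  have key : ∀ s : Set ℝ, s.OrdConnected → s ⊆ G →
      volume (F '' s) ≤ ∫⁻ t in s, ρ (γ t) * ENNReal.ofReal ‖deriv γ t‖ := by
    intro s hsord hsG
    rcases s.eq_empty_or_nonempty with rfl | hne
    · simp
    set J : ENNReal := ∫⁻ t in s, ρ (γ t) * ENNReal.ofReal ‖deriv γ t‖ with hJdef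
    have hsab : s ⊆ Set.Icc a b := hsG.trans hGsub
    have hcomp : IsCompact (F '' Set.Icc a b) := (isCompact_Icc.image_of_continuousOn hFc)
    have hsubim : F '' s ⊆ F '' Set.Icc a b := Set.image_mono hsab
    have hbdd : BddAbove (F '' s) := hcomp.bddAbove.mono hsubim
    have hbddb : BddBelow (F '' s) := hcomp.bddBelow.mono hsubim
    set m : ℝ := sInf (F '' s) with hm
    set M : ℝ := sSup (F '' s) with hM
    have h1 : volume (F '' s) ≤ ENNReal.ofReal (M - m) := by
      calc volume (F '' s) ≤ volume (Set.Icc m M) :=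
            measure_mono (subset_Icc_csInf_csSup hbddb hbdd)
        _ = ENNReal.ofReal (M - m) := Real.volume_Icc
    refine h1.trans ?_
    by_cases hJ : J = ⊤
    · simp [hJ]
    rw [ENNReal.ofReal_le_iff_le_toReal hJ]
    -- main distance estimate
    have main : ∀ x y : ℝ, x ∈ s → y ∈ s → x ≤ y → dist (v x) (v y) ≤ J.toReal := by
      intro x y hx hy hxy
      have hIcc : Set.Icc x y ⊆ s := hsord.out hx hy
      have hIab : Set.Icc x y ⊆ Set.Icc a b := hIcc.trans hsab
      have hACxy : IsACOn γ x y := by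
        refine ⟨hγc.mono hIab, ?_, fun s' t' hs' ht' hst =>
          hAC.2.2 s' t' (hIab hs') (hIab ht') hst⟩
        refine hAC.2.1.mono_set ?_
        rw [Set.uIcc_of_le hxy, Set.uIcc_of_le hab]
        exact hIab
      have hmem : ∀ t ∈ Set.Icc x y, γ t ∈ Metric.ball (0 : E2) 1 \ K :=
        fun t ht => (hsG (hIcc ht)).2
      have h3 := hρ γ x y hxy hACxy hmem
      have h4 : (∫⁻ t in Set.Icc x y, ρ (γ t) * ENNReal.ofReal ‖deriv γ t‖) ≤ J :=
        lintegral_mono_set hIcc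
      have h5 : ENNReal.ofReal (dist (v x) (v y)) ≤ J := h3.trans h4
      calc dist (v x) (v y) = (ENNReal.ofReal (dist (v x) (v y))).toReal :=
            (ENNReal.toReal_ofReal dist_nonneg).symm
        _ ≤ J.toReal := ENNReal.toReal_mono hJ h5
    have hdist : ∀ x y : ℝ, x ∈ s → y ∈ s → dist (v x) (v y) ≤ J.toReal := by
      intro x y hx hy
      rcases le_total x y with h | h
      · exact main x y hx hy h
      · rw [dist_comm]; exact main y x hy hx h
    refine le_of_forall_pos_le_add fun ε hε => ?_
    obtain ⟨z1, hz1, hz1'⟩ := exists_lt_of_lt_csSup (hne.image F)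
      (show M - ε / 2 < M by linarith)
    obtain ⟨z2, hz2, hz2'⟩ := exists_lt_of_csInf_lt (hne.image F)
      (show m < m + ε / 2 by linarith)
    obtain ⟨x, hx, rfl⟩ := hz1
    obtain ⟨y, hy, rfl⟩ := hz2
    have htri : F x - F y ≤ dist (v x) (v y) := by
      have := dist_triangle (v a) (v y) (v x)
      have h2 : dist (v y) (v x) = dist (v x) (v y) := dist_comm _ _
      simp only [hFdef]
      linarith
    have := hdist x y hx hy
    linarith
  -- the bad set
  set A : Set ℝ := {t ∈ Set.Icc a b | γ t ∈ K} with hA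
  have hA0 : volume (F '' A) = 0 := by
    have himg : F '' A ⊆ (fun z => dist (v a) z) '' (u '' K) := by
      rintro _ ⟨t, ht, rfl⟩
      exact ⟨u (γ t), ⟨γ t, ht.2, rfl⟩, rfl⟩
    have hlip : LipschitzWith 1 (fun z : X => dist (v a) z) := LipschitzWith.dist_right (v a)
    have h2 : volume ((fun z : X => dist (v a) z) '' (u '' K)) = 0 := by
      rw [← MeasureTheory.hausdorffMeasure_real]
      have h4 := hlip.hausdorffMeasure_image_le (d := 1) one_pos.le (u '' K)
      rw [huK, mul_zero] at h4
      exact le_antisymm h4 zero_le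
    exact le_antisymm ((measure_mono himg).trans h2.le) zero_le
  -- component decomposition of G
  set S : Set (Set ℝ) :=
    (fun q : ℚ => connectedComponentIn G (q : ℝ)) '' {q : ℚ | (q : ℝ) ∈ G} with hSdef
  have hScount : S.Countable := (Set.to_countable _).image _
  haveI : Countable ↥S := hScount.to_subtype
  have hSsub : ∀ c ∈ S, c ⊆ G := by
    rintro _ ⟨q, hq, rfl⟩
    exact connectedComponentIn_subset _ _
  have hSunion : ⋃₀ S = G := by
    apply Set.Subset.antisymm (Set.sUnion_subset hSsub)
    intro x hx
    have hcopen : IsOpen (connectedComponentIn G x) := hGopen.connectedComponentIn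
    have hxc : x ∈ connectedComponentIn G x := mem_connectedComponentIn hx
    obtain ⟨ε, hε, hball'⟩ := Metric.isOpen_iff.1 hcopen x hxc
    obtain ⟨q, hq1, hq2⟩ := exists_rat_btwn (show x - ε < x + ε by linarith)
    have hqmem : (q : ℝ) ∈ connectedComponentIn G x := by
      apply hball'
      rw [Real.ball_eq_Ioo]
      exact ⟨hq1, hq2⟩
    have hqG : (q : ℝ) ∈ G := connectedComponentIn_subset _ _ hqmem
    have heq : connectedComponentIn G x = connectedComponentIn G (q : ℝ) :=
      connectedComponentIn_eq hqmem
    exact ⟨connectedComponentIn G (q : ℝ), ⟨q, hqG, rfl⟩, heq ▸ hxc⟩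
  have hSdisj : Pairwise (Function.onFun Disjoint fun c : ↥S => (c : Set ℝ)) := by
    rintro ⟨c1, q1, hq1, rfl⟩ ⟨c2, q2, hq2, rfl⟩ hne
    rw [Function.onFun]
    rw [Set.disjoint_left]
    intro z hz1 hz2
    refine hne (Subtype.ext (show connectedComponentIn G (q1 : ℝ) =
      connectedComponentIn G (q2 : ℝ) from ?_))
    exact (connectedComponentIn_eq hz1).trans (connectedComponentIn_eq hz2).symm
  have hSmeas : ∀ c : ↥S, MeasurableSet (c : Set ℝ) := by
    rintro ⟨_, q, hq, rfl⟩
    exact hGopen.connectedComponentIn.measurableSet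
  have hSord : ∀ c : ↥S, Set.OrdConnected (c : Set ℝ) := by
    rintro ⟨_, q, hq, rfl⟩
    exact isPreconnected_connectedComponentIn.ordConnected
  -- assemble
  have hcover : Set.Icc a b ⊆ A ∪ G ∪ {a, b} := by
    intro t ht
    by_cases hK' : γ t ∈ K
    · exact Or.inl (Or.inl ⟨ht, hK'⟩)
    by_cases hta : t = a
    · exact Or.inr (Or.inl hta)
    by_cases htb : t = b
    · exact Or.inr (Or.inr htb)
    refine Or.inl (Or.inr ⟨⟨lt_of_le_of_ne ht.1 (Ne.symm hta), lt_of_le_of_ne ht.2 htb⟩,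
      hball t ht, hK'⟩)
  have hGiUnion : G = ⋃ c : ↥S, (c : Set ℝ) := by
    rw [← hSunion, Set.sUnion_eq_iUnion]
  calc ENNReal.ofReal (dist (u (γ a)) (u (γ b)))
      = volume (Set.Icc (0 : ℝ) (F b)) := by
        rw [Real.volume_Icc, sub_zero]
    _ ≤ volume (F '' Set.Icc a b) := by
        apply measure_mono
        have h := intermediate_value_Icc hab hFc
        have hFa : F a = 0 := dist_self _
        rw [hFa] at h
        exact h
    _ ≤ volume (F '' A ∪ F '' G ∪ F '' {a, b}) := by
        apply measure_mono
        intro z hz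
        obtain ⟨t, ht, rfl⟩ := hz
        rcases hcover ht with (h | h) | h
        · exact Or.inl (Or.inl ⟨t, h, rfl⟩)
        · exact Or.inl (Or.inr ⟨t, h, rfl⟩)
        · exact Or.inr ⟨t, h, rfl⟩
    _ ≤ volume (F '' A ∪ F '' G) + volume (F '' {a, b}) := measure_union_le _ _
    _ ≤ volume (F '' A) + volume (F '' G) + volume (F '' {a, b}) :=
        add_le_add_left (measure_union_le _ _) _
    _ = volume (F '' G) := by
        rw [hA0, zero_add,
          ((Set.toFinite ({a, b} : Set ℝ)).image F).measure_zero volume, add_zero]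
    _ ≤ ∑' c : ↥S, volume (F '' (c : Set ℝ)) := by
        rw [hGiUnion, Set.image_iUnion]
        exact measure_iUnion_le _
    _ ≤ ∑' c : ↥S, ∫⁻ t in (c : Set ℝ), ρ (γ t) * ENNReal.ofReal ‖deriv γ t‖ :=
        ENNReal.tsum_le_tsum fun c => key _ (hSord c) (hSsub _ c.2)
    _ = ∫⁻ t in ⋃ c : ↥S, (c : Set ℝ), ρ (γ t) * ENNReal.ofReal ‖deriv γ t‖ :=
        (lintegral_iUnion hSmeas hSdisj _).symm
    _ = ∫⁻ t in G, ρ (γ t) * ENNReal.ofReal ‖deriv γ t‖ := by rw [← hGiUnion]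
    _ = ∫⁻ t in G, Om.indicator ρ (γ t) * ENNReal.ofReal ‖deriv γ t‖ := by
        apply setLIntegral_congr_fun hGopen.measurableSet
        intro t ht
        beta_reduce
        rw [Set.indicator_of_mem (Set.mem_preimage.mp ht.2) ρ]
    _ ≤ ∫⁻ t in Set.Icc a b, Om.indicator ρ (γ t) * ENNReal.ofReal ‖deriv γ t‖ :=
        lintegral_mono_set hGsub
end
end
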